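/- The binary Pascal matrix P and the anti-diagonal matrix J (with ones on the anti-diagonal) satisfy the identity P J P = J P J over GF(2). -/
import Mathlib

open Matrix Finset

lemma key (k : ℕ) : ∀ n i : ℕ, k ≤ n →
    (∑ j ∈ Finset.range (k+1), ((k.choose j : ZMod 2) * ((n - j).choose i : ZMod 2))) =
    if k ≤ i ∧ i ≤ n then (((n - k).choose (i - k) : ℕ) : ZMod 2) else 0 := by
  induction k with
  | zero =>
    intro n i _
    rw [Finset.sum_range_one]
    simp only [Nat.choose_zero_right, Nat.cast_one, one_mul, Nat.sub_zero, Nat.zero_le, true_and]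
    split
    · rfl
    · next h => rw [Nat.choose_eq_zero_of_lt (by omega)]; simp
  | succ k ih =>
    intro n i hn
    have h1 : (∑ j ∈ Finset.range (k+2), (((k+1).choose j : ZMod 2) * ((n - j).choose i : ZMod 2))) =
        (∑ j ∈ Finset.range (k+1), ((k.choose j : ZMod 2) * ((n - j).choose i : ZMod 2))) +
        (∑ j ∈ Finset.range (k+1), ((k.choose j : ZMod 2) * ((n - 1 - j).choose i : ZMod 2))) := by
      have congr1 : (∑ j ∈ Finset.range (k+1), (((k+1).choose (j+1) : ZMod 2) * ((n - (j+1)).choose i : ZMod 2)))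
          = ∑ j ∈ Finset.range (k+1), ((k.choose j : ZMod 2) * ((n - 1 - j).choose i : ZMod 2)
            + (k.choose (j+1) : ZMod 2) * ((n - 1 - j).choose i : ZMod 2)) := by
        refine Finset.sum_congr rfl fun j _ => ?_
        have e1 : ((k+1).choose (j+1) : ZMod 2) = (k.choose j : ZMod 2) + (k.choose (j+1) : ZMod 2) := by
          rw [Nat.choose_succ_succ]; push_cast; ring
        have e2 : n - (j+1) = n - 1 - j := by omega
        rw [e1, add_mul, e2]
      have congr2 : (∑ j ∈ Finset.range (k+1), ((k.choose (j+1) : ZMod 2) * ((n - 1 - j).choose i : ZMod 2)))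
          = ∑ j ∈ Finset.range (k+1), ((k.choose (j+1) : ZMod 2) * ((n - (j+1)).choose i : ZMod 2)) := by
        refine Finset.sum_congr rfl fun j _ => ?_
        have e2 : n - (j+1) = n - 1 - j := by omega
        rw [e2]
      rw [Finset.sum_range_succ' (fun j => (((k+1).choose j : ZMod 2) * ((n - j).choose i : ZMod 2))) (k+1),
        congr1, Finset.sum_add_distrib, congr2]
      have peel : (∑ j ∈ Finset.range (k+1), ((k.choose (j+1) : ZMod 2) * ((n - (j+1)).choose i : ZMod 2)))
          + (k.choose 0 : ZMod 2) * ((n - 0).choose i : ZMod 2)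
          = ∑ j ∈ Finset.range (k+1), ((k.choose j : ZMod 2) * ((n - j).choose i : ZMod 2)) := by
        rw [← Finset.sum_range_succ' (fun j => ((k.choose j : ZMod 2) * ((n - j).choose i : ZMod 2))) (k+1),
          Finset.sum_range_succ, Nat.choose_succ_self]
        push_cast; ring
      simp only [Nat.choose_zero_right, Nat.cast_one, one_mul, Nat.sub_zero] at peel ⊢
      linear_combination peel
    rw [h1, ih n i (by omega), ih (n-1) i (by omega)]
    by_cases hik : i < k
    · rw [if_neg (by omega), if_neg (by omega), if_neg (by omega)]; simp
    · by_cases hik2 : i = k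
      · subst hik2
        rw [if_pos ⟨le_refl _, by omega⟩, if_pos ⟨le_refl _, by omega⟩, if_neg (by omega)]
        simp only [Nat.sub_self, Nat.choose_zero_right, Nat.cast_one]
        decide
      · -- k < i
        have hki : k < i := by omega
        by_cases hin : i ≤ n - 1
        · rw [if_pos ⟨by omega, by omega⟩, if_pos ⟨by omega, by omega⟩, if_pos ⟨by omega, by omega⟩]
          have e3 : n - k = (n - 1 - k) + 1 := by omega
          have e4 : i - k = (i - 1 - k) + 1 := by omega
          have e5 : i - (k+1) = i - 1 - k := by omega
          have e6 : n - (k+1) = n - 1 - k := by omega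
          rw [e3, e4, e5, e6, Nat.choose_succ_succ]
          have e7 : i - 1 - k + 1 = i - k := by omega
          push_cast
          simp only [e7, Nat.succ_eq_add_one]
          have hcc : ((n-1-k).choose (i-k) : ZMod 2) + ((n-1-k).choose (i-k) : ZMod 2) = 0 :=
            CharTwo.add_self_eq_zero _
          linear_combination hcc
        · by_cases hin2 : i ≤ n
          · have : i = n := by omega
            subst this
            rw [if_pos ⟨by omega, le_refl _⟩, if_neg (by omega), if_pos ⟨by omega, le_refl _⟩]
            rw [Nat.choose_self, Nat.choose_self]
            simp
          · rw [if_neg (by omega), if_neg (by omega), if_neg (by omega)]; simp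

/-- The binary Pascal matrix over GF(2): entries C(j-1, i-1) mod 2 (1-indexed),
i.e. C(j, i) with 0-indexed `Fin`. -/
def pascal (m : ℕ) : Matrix (Fin m) (Fin m) (ZMod 2) :=
  fun i j => (Nat.choose j.val i.val : ZMod 2)

/-- The anti-diagonal matrix over GF(2), with ones on the anti-diagonal. -/
def antiDiag (m : ℕ) : Matrix (Fin m) (Fin m) (ZMod 2) :=
  fun i j => if i.val + j.val + 1 = m then 1 else 0

lemma antiDiag_apply (m : ℕ) (i j : Fin m) :
    antiDiag m i j = if j = i.rev then 1 else 0 := by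
  unfold antiDiag
  congr 1
  simp only [eq_iff_iff, Fin.ext_iff, Fin.val_rev]
  omega

lemma mul_antiDiag (m : ℕ) (A : Matrix (Fin m) (Fin m) (ZMod 2)) (i k : Fin m) :
    (A * antiDiag m) i k = A i k.rev := by
  rw [Matrix.mul_apply]
  have : ∀ j : Fin m, antiDiag m j k = if j = k.rev then 1 else 0 := by
    intro j
    rw [antiDiag_apply]
    congr 1
    simp only [eq_iff_iff, Fin.ext_iff, Fin.val_rev]
    omega
  simp only [this, mul_ite, mul_one, mul_zero]
  simp [Finset.sum_ite_eq']

lemma antiDiag_mul (m : ℕ) (A : Matrix (Fin m) (Fin m) (ZMod 2)) (i k : Fin m) :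
    (antiDiag m * A) i k = A i.rev k := by
  rw [Matrix.mul_apply]
  simp only [antiDiag_apply, ite_mul, one_mul, zero_mul]
  simp [Finset.sum_ite_eq]

/-- `P J P = J P J` over GF(2). -/
theorem pascal_antiDiag_pascal (m : ℕ) :
    pascal m * antiDiag m * pascal m = antiDiag m * pascal m * antiDiag m := by
  ext i k
  rw [mul_antiDiag m (antiDiag m * pascal m) i k, antiDiag_mul, Matrix.mul_apply]
  simp only [mul_antiDiag m (pascal m)]
  unfold pascal
  -- goal: ∑ j, C(j.rev, i) * C(k, j) = C(k.rev, i.rev)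
  have hm : 0 < m := i.pos
  have hrev : ∀ j : Fin m, (j.rev : ℕ) = m - 1 - (j : ℕ) := by
    intro j; rw [Fin.val_rev]; omega
  simp only [hrev]
  rw [Fin.sum_univ_eq_sum_range (fun j => (((m - 1 - j).choose i : ℕ) : ZMod 2) * ((k : ℕ).choose j : ZMod 2))]
  have hkm : (k : ℕ) + 1 ≤ m := k.is_lt
  have hsub : (∑ j ∈ Finset.range m, (((m - 1 - j).choose i : ℕ) : ZMod 2) * ((k : ℕ).choose j : ZMod 2))
      = ∑ j ∈ Finset.range ((k : ℕ) + 1), (((m - 1 - j).choose i : ℕ) : ZMod 2) * ((k : ℕ).choose j : ZMod 2) := by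
    rw [Finset.sum_subset (Finset.range_subset_range.mpr hkm)]
    intro x _ hx
    rw [Finset.mem_range, not_lt] at hx
    rw [Nat.choose_eq_zero_of_lt (show (k:ℕ) < x by omega)]
    simp
  rw [hsub]
  have := key (k : ℕ) (m - 1) (i : ℕ) (by omega)
  rw [show (∑ j ∈ Finset.range ((k:ℕ)+1), (((m - 1 - j).choose i : ℕ) : ZMod 2) * ((k : ℕ).choose j : ZMod 2))
    = (∑ j ∈ Finset.range ((k:ℕ)+1), (((k:ℕ).choose j : ZMod 2) * ((m - 1 - j).choose i : ZMod 2))) by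
      apply Finset.sum_congr rfl; intros; ring]
  rw [this]
  have hi : (i : ℕ) ≤ m - 1 := by omega
  by_cases hki : (k : ℕ) ≤ (i : ℕ)
  · rw [if_pos ⟨hki, hi⟩]
    congr 1
    rw [show m - 1 - (i:ℕ) = (m - 1 - (k:ℕ)) - ((i:ℕ) - (k:ℕ)) by omega,
      Nat.choose_symm (by omega)]
  · rw [if_neg (by omega)]
    rw [Nat.choose_eq_zero_of_lt (show (m-1-(k:ℕ)) < m-1-(i:ℕ) by omega)]
    simp
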